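/- Let H and G be groups, Ψ : G → Aut(H) an action, and B : H → G a relative Rota–Baxter operator. Then the operation h ∘ k = h · Ψ_{B(h)}(k) makes H into a group, and B : (H, ∘) → G is a group homomorphism. -/

import Mathlib

/-- For a relative Rota–Baxter operator `B : H → G` with respect to `Ψ`, the
operation `h ∘ k = h ⬝ Ψ_{B h}(k)` makes `H` a group, and
`B : (H, ∘) → G` is a group homomorphism. -/
theorem relative_rb_descendent_group {H G : Type*} [Group H] [Group G]
    (Ψ : G →* MulAut H) (B : H → G)
    (hB : ∀ h k : H, B h * B k = B (h * Ψ (B h) k))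
    (circ : H → H → H) (hcirc : ∀ h k : H, circ h k = h * Ψ (B h) k) :
    (∀ a b c : H, circ (circ a b) c = circ a (circ b c)) ∧
    (∀ a : H, circ 1 a = a) ∧ (∀ a : H, circ a 1 = a) ∧
    (∀ a : H, ∃ b : H, circ a b = 1 ∧ circ b a = 1) ∧
    (∀ a b : H, B (circ a b) = B a * B b) := by
  have hBmul : ∀ a b : H, B (circ a b) = B a * B b := by
    intro a b; rw [hcirc, ← hB]
  have hassoc : ∀ a b c : H, circ (circ a b) c = circ a (circ b c) := by
    intro a b c
    rw [hcirc (circ a b), hcirc a (circ b c), hBmul, hcirc a b, hcirc b c,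
      map_mul, MulAut.mul_apply, map_mul, mul_assoc]
  have hB1 : B 1 = 1 := by
    have h := hB 1 1
    simp only [map_one, one_mul] at h
    exact mul_eq_right.mp h
  have hone : ∀ a : H, circ 1 a = a := by
    intro a; rw [hcirc, hB1, map_one, one_mul, MulAut.one_apply]
  have honer : ∀ a : H, circ a 1 = a := by
    intro a; rw [hcirc, map_one, mul_one]
  have hrinv : ∀ a : H, circ a ((Ψ (B a))⁻¹ a⁻¹) = 1 := by
    intro a
    rw [hcirc]
    simp
  refine ⟨hassoc, hone, honer, ?_, hBmul⟩
  intro a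
  refine ⟨(Ψ (B a))⁻¹ a⁻¹, hrinv a, ?_⟩
  set b := (Ψ (B a))⁻¹ a⁻¹ with hb
  set c := (Ψ (B b))⁻¹ b⁻¹ with hc
  calc circ b a = circ (circ b a) (circ b c) := by rw [hrinv, honer]
    _ = circ b (circ (circ a b) c) := by rw [hassoc, hassoc]
    _ = 1 := by rw [hrinv, hone, hrinv]
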